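/- The fuse operation preserves query satisfaction: if a tree t satisfies a twig query q (i.e., q embeds into t), and t' is obtained from t by fusing two sibling nodes with the same label (replacing them by a single node with that label whose children are the union of the children subtrees of the two nodes), then q embeds into t'. -/
import Mathlib


open scoped Classical

variable {α : Type}

/-- Unordered words: multisets of symbols, as occurrence-count functions. -/
abbrev UWord (α : Type) := α → ℕ

/-- Multiplicities `*`, `+`, `?`, `0`, `1`. -/
inductive Mult : Type where
  | zero | one | opt | plus | star
deriving DecidableEq

/-- Interpretation of multiplicities as sets of natural numbers. -/
def Mult.sem : Mult → Set ℕ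
  | .zero => {0}
  | .one => {1}
  | .opt => {0, 1}
  | .plus => {n | 0 < n}
  | .star => Set.univ

/-- A disjunction `a₁^{M₁} | … | a_k^{M_k}`. -/
abbrev Disj (α : Type) := List (α × Mult)

/-- A disjunctive multiplicity expression `D₁^{M₁} ⊎ … ⊎ D_n^{M_n}`. -/
abbrev DME (α : Type) := List (Disj α × Mult)

/-- Language of `a^M`. -/
def singleLang (a : α) (m : Mult) : Set (UWord α) :=
  {w | w a ∈ m.sem ∧ ∀ b, b ≠ a → w b = 0}

/-- Language of a disjunction. -/
def disjLang (D : Disj α) : Set (UWord α) :=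
  {w | ∃ p ∈ D, w ∈ singleLang p.1 p.2}

/-- Pointwise (multiset) sum of a list of unordered words. -/
def sumWords (ws : List (UWord α)) : UWord α := fun a => (ws.map (fun u => u a)).sum

/-- Language of `D^M`. -/
def powLang (L : Set (UWord α)) (m : Mult) : Set (UWord α) :=
  {w | ∃ ws : List (UWord α), ws.length ∈ m.sem ∧ (∀ u ∈ ws, u ∈ L) ∧ w = sumWords ws}

/-- Language of a disjunctive multiplicity expression. -/
def dmeLang (E : DME α) : Set (UWord α) :=
  {w | ∃ ws : List (UWord α),
      List.Forall₂ (fun p u => u ∈ powLang (disjLang p.1) p.2) E ws ∧ w = sumWords ws}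

/-- Symbols occurring in a disjunctive multiplicity expression. -/
def dmeSymbols (E : DME α) : List α := E.flatMap (fun p => p.1.map Prod.fst)

/-- Normalized disjunctive multiplicity expression (each symbol occurs at most once,
each disjunction nonempty, and the two normal-form conditions of the paper). -/
def Normalized (E : DME α) : Prop :=
  (dmeSymbols E).Nodup ∧
  ∀ p ∈ E, p.1 ≠ [] ∧
    (p.2 ≠ Mult.one → p.2 = Mult.plus ∧ ∀ q ∈ p.1, q.2 = Mult.one) ∧
    ((∃ q ∈ p.1, (0 : ℕ) ∈ q.2.sem) → ∀ q ∈ p.1, (0 : ℕ) ∈ q.2.sem)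

/-- Conflicting pairs of siblings `C_E`. -/
def CE (E : DME α) : Set (α × α) :=
  {p | ¬ ∃ w ∈ dmeLang E, w p.1 ≠ 0 ∧ w p.2 ≠ 0}

/-- Extended cardinality map `N_E`. -/
def NE (E : DME α) : Set (α × ℕ) :=
  {p | ∃ w ∈ dmeLang E, w p.1 = p.2}

/-- Sets of required symbols `P_E`. -/
def PE (E : DME α) : Set (Set α) :=
  {X | ∀ w ∈ dmeLang E, ∃ a ∈ X, w a ≠ 0}

/-- Consistency of an unordered word with a characterizing triple. -/
def ConsTriple (w : UWord α) (C : Set (α × α)) (N : Set (α × ℕ)) (P : Set (Set α)) : Prop :=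
  (∀ p ∈ C, ¬ (w p.1 ≠ 0 ∧ w p.2 ≠ 0)) ∧
  (∀ a, (a, w a) ∈ N) ∧
  (∀ X ∈ P, ∃ a ∈ X, w a ≠ 0)

/-- Language of a disjunction-free multiplicity expression given as a list of
symbol/multiplicity pairs. -/
def dfLang (l : List (α × Mult)) : Set (UWord α) :=
  {w | (∀ p ∈ l, w p.1 ∈ p.2.sem) ∧ ∀ b, b ∉ l.map Prod.fst → w b = 0}

/-- Finite unordered trees. -/
inductive UTree (α : Type) : Type where
  | node : α → List (UTree α) → UTree α

def UTree.lab : UTree α → α | .node a _ => a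

def UTree.children : UTree α → List (UTree α) | .node _ ts => ts

/-- Twig queries: labels in `Σ ∪ {⋆}` (wildcard = `none`); each child subquery is tagged
with `false` for a child edge and `true` for a descendant edge. -/
inductive Twig (α : Type) : Type where
  | node : Option α → List (Twig α × Bool) → Twig α

/-- Proper subtree (proper descendant) relation. -/
inductive StrictDesc : UTree α → UTree α → Prop where
  | child {s t : UTree α} : s ∈ t.children → StrictDesc s t
  | step {s u t : UTree α} : StrictDesc s u → u ∈ t.children → StrictDesc s t

/-- `Sat t q`: the twig query `q` can be embedded in the tree `t`
(root to root, child edges to child edges, descendant edges to proper descendants,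
labels preserved up to wildcard). -/
def Sat : UTree α → Twig α → Prop
  | t, .node l qs =>
      (∀ x ∈ l, x = t.lab) ∧
      ∀ p ∈ qs, (p.2 = false → ∃ t' ∈ t.children, Sat t' p.1) ∧
                (p.2 = true → ∃ t', StrictDesc t' t ∧ Sat t' p.1)
termination_by t q => sizeOf q
decreasing_by
  all_goals
    obtain ⟨q', b'⟩ := p
    have h1 : sizeOf ((q', b') : Twig α × Bool) < sizeOf qs := List.sizeOf_lt_of_mem (by assumption)
    simp at h1 ⊢
    omega

/-- `TEmb t' t` : the tree `t'` can be embedded in the tree `t` (root-, child-, and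
label-preserving). -/
def TEmb : UTree α → UTree α → Prop
  | .node a ts', t => t.lab = a ∧ ∀ s' ∈ ts', ∃ s ∈ t.children, TEmb s' s

/-- `QGEmb E a q` : the twig query `q` can be embedded in the rooted graph with edge
relation `E` at root `a`. -/
def QGEmb (E : α → α → Prop) : α → Twig α → Prop
  | a, .node l qs =>
      (∀ x ∈ l, x = a) ∧
      ∀ p ∈ qs, (p.2 = false → ∃ b, E a b ∧ QGEmb E b p.1) ∧
                (p.2 = true → ∃ b, Relation.TransGen E a b ∧ QGEmb E b p.1)
termination_by a q => sizeOf q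
decreasing_by
  all_goals
    obtain ⟨q', b'⟩ := p
    have h1 : sizeOf ((q', b') : Twig α × Bool) < sizeOf qs := List.sizeOf_lt_of_mem (by assumption)
    simp at h1 ⊢
    omega

/-- Labeled paths of a tree: sequences of labels along root-to-node paths. -/
inductive IsLabPath : UTree α → List α → Prop where
  | root {a : α} {ts : List (UTree α)} : IsLabPath (UTree.node a ts) [a]
  | cons {a : α} {ts : List (UTree α)} {s : UTree α} {p : List α} :
      s ∈ ts → IsLabPath s p → IsLabPath (UTree.node a ts) (a :: p)

/-- Paths of a rooted graph: nonempty vertex sequences starting at the root and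
following edges. -/
def IsGPath (E : α → α → Prop) (root : α) (p : List α) : Prop :=
  p ≠ [] ∧ p.head? = some root ∧ p.Chain' E

/-- The unfolding of a rooted graph, truncated at depth `n`.  For a graph with no cycle
reachable from the root, taking `n = Fintype.card α` yields the full unfolding. -/
noncomputable def unfoldG [Fintype α] (E : α → α → Prop) : ℕ → α → UTree α
  | 0, a => .node a []
  | n + 1, a => .node a (((Finset.univ.filter fun b => E a b).toList).map (unfoldG E n))

/-- Number of leaves of a tree. -/
def leafCount : UTree α → ℕ
  | .node _ ts => if ts.isEmpty then 1 else (ts.attach.map (fun s => leafCount s.1)).sum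
decreasing_by
  have h1 := List.sizeOf_lt_of_mem s.2
  simp
  omega

/-- Disjunction-free multiplicity schema: a root label together with, for each label `a`,
a disjunction-free multiplicity expression given as the multiplicity `R a b` of every
symbol `b` (`Mult.zero` meaning `b` does not occur). -/
structure MS (α : Type) where
  root : α
  R : α → α → Mult

/-- Every node's children-label multiset matches the rule for the node's label. -/
inductive LocalOK [DecidableEq α] (R : α → α → Mult) : UTree α → Prop where
  | node {a : α} {ts : List (UTree α)} :
      (∀ b, ((ts.map UTree.lab).count b) ∈ (R a b).sem) →
      (∀ s ∈ ts, LocalOK R s) →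
      LocalOK R (UTree.node a ts)

/-- A tree satisfies a disjunction-free multiplicity schema. -/
def SatS [DecidableEq α] (S : MS α) (t : UTree α) : Prop :=
  t.lab = S.root ∧ LocalOK S.R t

/-- Edges of the universal dependency graph: `b` occurs in `R a` with multiplicity `+` or `1`. -/
def uEdge (S : MS α) (a b : α) : Prop := S.R a b = Mult.plus ∨ S.R a b = Mult.one

/-- Edges of the dependency graph: `b` occurs in `R a` with multiplicity in `{*,+,?,1}`. -/
def dEdge (S : MS α) (a b : α) : Prop := S.R a b ≠ Mult.zero

/-- A simulation of the rooted graph `(α, root, E)` in the tree `t`. -/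
def IsSimulation (E : α → α → Prop) (root : α) (t : UTree α) (R : α → UTree α → Prop) : Prop :=
  R root t ∧ (∀ a s, R a s → s.lab = a) ∧
  (∀ a s, R a s → ∀ b, E a b → ∃ s' ∈ s.children, R b s')

/-- One fuse step: two sibling nodes with the same label are merged into a single node
whose children are the children of both (applied anywhere in the tree). -/
inductive Fuse : UTree α → UTree α → Prop where
  | here {a b : α} {l₁ l₂ l₃ cs₁ cs₂ : List (UTree α)} :
      Fuse (UTree.node a (l₁ ++ UTree.node b cs₁ :: l₂ ++ UTree.node b cs₂ :: l₃))
           (UTree.node a (l₁ ++ UTree.node b (cs₁ ++ cs₂) :: l₂ ++ l₃))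
  | there {a : α} {s s' : UTree α} {l₁ l₂ : List (UTree α)} :
      Fuse s s' → Fuse (UTree.node a (l₁ ++ s :: l₂)) (UTree.node a (l₁ ++ s' :: l₂))

/-- One add step: an arbitrary new subtree is attached as an additional child of some
node of the tree. -/
inductive AddOp : UTree α → UTree α → Prop where
  | here {a : α} {s : UTree α} {l : List (UTree α)} :
      AddOp (UTree.node a l) (UTree.node a (s :: l))
  | there {a : α} {s s' : UTree α} {l₁ l₂ : List (UTree α)} :
      AddOp s s' → AddOp (UTree.node a (l₁ ++ s :: l₂)) (UTree.node a (l₁ ++ s' :: l₂))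

/-- Auxiliary simulation relation for the fuse proof. -/
inductive FSim {α : Type} : UTree α → UTree α → Prop where
  | refl (s : UTree α) : FSim s s
  | ext {b : α} {cs ds : List (UTree α)} (h : ∀ c ∈ cs, c ∈ ds) :
      FSim (UTree.node b cs) (UTree.node b ds)
  | fuse {s s' : UTree α} (h : Fuse s s') : FSim s s'

lemma fuse_lab {α : Type} {s s' : UTree α} (h : Fuse s s') : s.lab = s'.lab := by
  cases h <;> rfl

lemma fsim_lab {α : Type} {s s' : UTree α} (h : FSim s s') : s.lab = s'.lab := by
  cases h with
  | refl => rfl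
  | ext => rfl
  | fuse h => exact fuse_lab h

lemma fsim_child {α : Type} {s s' : UTree α} (h : FSim s s') :
    ∀ c ∈ s.children, ∃ c' ∈ s'.children, FSim c c' := by
  cases h with
  | refl s => exact fun c hc => ⟨c, hc, FSim.refl c⟩
  | ext h => exact fun c hc => ⟨c, h c hc, FSim.refl c⟩
  | fuse h =>
    cases h with
    | @here a b l₁ l₂ l₃ cs₁ cs₂ =>
      intro c hc
      simp only [UTree.children, List.mem_append, List.mem_cons] at hc ⊢
      rcases hc with ((h1 | (h1 | h1)) | (h1 | h1))
      · exact ⟨c, Or.inl (Or.inl h1), FSim.refl c⟩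
      · exact ⟨UTree.node b (cs₁ ++ cs₂), Or.inl (Or.inr (Or.inl rfl)),
          h1 ▸ FSim.ext (fun c hc => List.mem_append.2 (Or.inl hc))⟩
      · exact ⟨c, Or.inl (Or.inr (Or.inr h1)), FSim.refl c⟩
      · exact ⟨UTree.node b (cs₁ ++ cs₂), Or.inl (Or.inr (Or.inl rfl)),
          h1 ▸ FSim.ext (fun c hc => List.mem_append.2 (Or.inr hc))⟩
      · exact ⟨c, Or.inr h1, FSim.refl c⟩
    | @there a s s' l₁ l₂ hss =>
      intro c hc
      simp only [UTree.children, List.mem_append, List.mem_cons] at hc ⊢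
      rcases hc with (h1 | (h1 | h1))
      · exact ⟨c, Or.inl h1, FSim.refl c⟩
      · exact ⟨s', Or.inr (Or.inl rfl), h1 ▸ FSim.fuse hss⟩
      · exact ⟨c, Or.inr (Or.inr h1), FSim.refl c⟩

lemma fsim_desc {α : Type} {u s s' : UTree α} (hd : StrictDesc u s) (h : FSim s s') :
    ∃ u', StrictDesc u' s' ∧ FSim u u' := by
  induction hd generalizing s' with
  | child hc =>
    obtain ⟨c', hc', hsim⟩ := fsim_child h _ hc
    exact ⟨c', StrictDesc.child hc', hsim⟩
  | step hvm hms ih =>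
    obtain ⟨m', hm', hsimm⟩ := fsim_child h _ hms
    obtain ⟨u', hu', hsimu⟩ := ih hsimm
    exact ⟨u', StrictDesc.step hu' hm', hsimu⟩

lemma fsim_sat_aux {α : Type} : ∀ (n : ℕ) (q : Twig α), sizeOf q ≤ n → ∀ {s s' : UTree α},
    FSim s s' → Sat s q → Sat s' q := by
  intro n
  induction n with
  | zero =>
    intro q hn
    obtain ⟨l, qs⟩ := q
    simp at hn
  | succ n ih =>
    intro q hn s s' hsim hq
    obtain ⟨l, qs⟩ := q
    rw [Sat] at hq ⊢
    obtain ⟨hlab, hrest⟩ := hq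
    refine ⟨fun x hx => (hlab x hx).trans (fsim_lab hsim), fun p hp => ?_⟩
    have hsz : sizeOf p.1 ≤ n := by
      obtain ⟨q', b'⟩ := p
      have h1 : sizeOf ((q', b') : Twig α × Bool) < sizeOf qs := List.sizeOf_lt_of_mem hp
      simp at h1 hn ⊢
      omega
    constructor
    · intro hb
      obtain ⟨c, hc, hcsat⟩ := (hrest p hp).1 hb
      obtain ⟨c', hc', hcsim⟩ := fsim_child hsim c hc
      exact ⟨c', hc', ih _ hsz hcsim hcsat⟩
    · intro hb
      obtain ⟨u, hu, husat⟩ := (hrest p hp).2 hb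
      obtain ⟨u', hu', husim⟩ := fsim_desc hu hsim
      exact ⟨u', hu', ih _ hsz husim husat⟩

/-- the fuse operation preserves satisfaction of twig queries. -/
theorem fuse_preserves_query_satisfaction
    {α : Type} (t t' : UTree α) (q : Twig α)
    (hf : Fuse t t') (hq : Sat t q) : Sat t' q :=
  fsim_sat_aux (sizeOf q) q le_rfl (FSim.fuse hf) hq
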